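/- For every n ∈ ℕ and every real ξ > 0, ∫_{−1}^{1} Pₙ(s)/(cosh ξ − s)^{3/2} ds = (2√2/ sinh ξ) · e^{−(n+1/2)ξ}. -/

import Mathlib

/-- The degree-`n` Legendre polynomial, via Rodrigues' formula. -/
noncomputable def legendreP (n : ℕ) (s : ℝ) : ℝ :=
  (1 : ℝ) / (2 ^ n * (n.factorial : ℝ)) *
    iteratedDeriv n (fun x : ℝ => (x ^ 2 - 1) ^ n) s

open Polynomial Finset


/-- iterated deriv of polynomial eval. -/
lemma iteratedDeriv_polyeval (P : Polynomial ℝ) (k : ℕ) :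
    iteratedDeriv k (fun x : ℝ => P.eval x) = fun x => (Polynomial.derivative^[k] P).eval x := by
  induction k with
  | zero => simp
  | succ k ih =>
    rw [iteratedDeriv_succ, ih]
    funext x
    rw [Function.iterate_succ_apply']
    exact Polynomial.deriv _

lemma X_mul_deriv_monomial (a : ℝ) (m : ℕ) :
    (X : Polynomial ℝ) * Polynomial.derivative (C a * X ^ m) = C (a * m) * X ^ m := by
  cases m with
  | zero => simp
  | succ m =>
    rw [Polynomial.derivative_C_mul, Polynomial.derivative_X_pow]
    push_cast
    rw [show C (a * ((m:ℝ) + 1)) = C a * C ((m:ℝ)+1) from by rw [C_mul], pow_succ]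
    ring

/-- solution of the ODE -X h' + (1/2) h = g -/
noncomputable def solODE (g : Polynomial ℝ) : Polynomial ℝ :=
  ∑ m ∈ range (g.natDegree + 1), C (g.coeff m * ((1/2 : ℝ) - m)⁻¹) * X ^ m

lemma half_sub_ne (m : ℕ) : ((1/2 : ℝ) - m) ≠ 0 := by
  intro h
  have h2 : (1 : ℝ) = 2 * m := by linarith
  have : (2 * m : ℕ) = 1 := by exact_mod_cast h2.symm
  omega

lemma solODE_spec (g : Polynomial ℝ) :
    -(X * Polynomial.derivative (solODE g)) + C (1/2 : ℝ) * solODE g = g := by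
  conv_rhs => rw [g.as_sum_range_C_mul_X_pow]
  rw [solODE, derivative_sum, Finset.mul_sum, Finset.mul_sum, ← Finset.sum_neg_distrib,
    ← Finset.sum_add_distrib]
  refine Finset.sum_congr rfl fun m _ => ?_
  rw [X_mul_deriv_monomial, ← mul_assoc, ← C_mul, ← neg_mul, ← C_neg, ← add_mul, ← C_add]
  congr 2
  have h' : (1 - (m:ℝ) * 2) ≠ 0 := by
    have := half_sub_ne m; intro hc; apply this; linarith
  have h2 : (1 - (m:ℝ)*2)⁻¹ * (1 - (m:ℝ)*2) = 1 := inv_mul_cancel₀ h'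
  field_simp [h']
  linear_combination g.coeff m * h2

lemma solODE_natDegree_le (g : Polynomial ℝ) : (solODE g).natDegree ≤ g.natDegree := by
  apply Polynomial.natDegree_sum_le_of_forall_le
  intro m hm
  calc (C (g.coeff m * ((1/2 : ℝ) - m)⁻¹) * X ^ m).natDegree ≤ m := by
        apply (Polynomial.natDegree_C_mul_le _ _).trans
        simp
    _ ≤ g.natDegree := by
        simp only [Finset.mem_range] at hm; omega

lemma ode_iter (h g : Polynomial ℝ) (μ : ℝ)
    (hode : -(X * Polynomial.derivative h) + C μ * h = g) (k : ℕ) :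
    -(X * Polynomial.derivative (Polynomial.derivative^[k] h))
      + C (μ - k) * Polynomial.derivative^[k] h = Polynomial.derivative^[k] g := by
  induction k with
  | zero => simpa using hode
  | succ k ih =>
    have h1 := congrArg Polynomial.derivative ih
    rw [derivative_add, derivative_neg, derivative_mul, derivative_X, derivative_mul,
      derivative_C] at h1
    rw [Function.iterate_succ_apply', Function.iterate_succ_apply']
    push_cast
    have hC : C (μ - ((k:ℝ)+1)) = C (μ - (k:ℝ)) - 1 := by
      rw [show μ - ((k:ℝ)+1) = (μ - (k:ℝ)) - 1 by ring, map_sub, C_1]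
    linear_combination h1 + Polynomial.derivative ((⇑Polynomial.derivative)^[k] h) * hC

lemma iter_deriv_comp_reflect (c : ℝ) (f : Polynomial ℝ) (k : ℕ) :
    Polynomial.derivative^[k] (f.comp (C c - X))
      = C ((-1:ℝ) ^ k) * ((Polynomial.derivative^[k] f).comp (C c - X)) := by
  induction k with
  | zero => simp
  | succ k ih =>
    rw [Function.iterate_succ_apply', ih, derivative_C_mul, Polynomial.derivative_comp,
      Function.iterate_succ_apply']
    rw [derivative_sub, derivative_C, derivative_X, zero_sub, pow_succ, C_mul, map_neg, C_1]
    ring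

lemma iter_deriv_sum {ι : Type*} (s : Finset ι) (f : ι → Polynomial ℝ) (m : ℕ) :
    Polynomial.derivative^[m] (∑ i ∈ s, f i) = ∑ i ∈ s, Polynomial.derivative^[m] (f i) := by
  induction m with
  | zero => simp
  | succ m ih =>
    rw [Function.iterate_succ_apply', ih, derivative_sum]
    exact Finset.sum_congr rfl fun i _ => (Function.iterate_succ_apply' _ _ _).symm

lemma p_expand (a b : ℝ) (n : ℕ) :
    ((X - C a) ^ n * (X - C b) ^ n : Polynomial ℝ)
      = ∑ j ∈ range (n+1), C ((n.choose j : ℝ) * (a - b)^(n-j)) * (X - C a)^(n+j) := by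
  have hb : ((X : Polynomial ℝ) - C b) = (X - C a) + C (a - b) := by
    rw [map_sub]; ring
  rw [hb, add_pow, Finset.mul_sum]
  refine Finset.sum_congr rfl fun j _ => ?_
  rw [C_mul, map_natCast, map_pow, pow_add]
  ring

lemma p_iter_deriv_eval (a b : ℝ) (n k : ℕ) (hk : k ≤ n) :
    (Polynomial.derivative^[n+k] ((X - C a) ^ n * (X - C b) ^ n : Polynomial ℝ)).eval a
      = (n.choose k : ℝ) * (a - b)^(n-k) * ((n+k).factorial : ℝ) := by
  rw [p_expand, iter_deriv_sum]
  rw [Polynomial.eval_finset_sum]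
  rw [Finset.sum_eq_single_of_mem k (by simp; omega)]
  · rw [Polynomial.iterate_derivative_C_mul, Polynomial.iterate_derivative_X_sub_pow]
    simp [Nat.descFactorial_self]
  · intro j hj hjk
    rw [Polynomial.iterate_derivative_C_mul, Polynomial.iterate_derivative_X_sub_pow]
    rcases lt_or_gt_of_ne hjk with h | h
    · have : (n+j).descFactorial (n+k) = 0 := by
        apply Nat.descFactorial_eq_zero_iff_lt.mpr; omega
      simp [this]
    · have : (n+j) - (n+k) ≠ 0 := by omega
      simp [zero_pow this]

lemma half_sub_ne' (m : ℕ) : ((1/2 : ℝ) - m) ≠ 0 := by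
  intro h
  have h2 : (1 : ℝ) = 2 * m := by linarith
  have : (2 * m : ℕ) = 1 := by exact_mod_cast h2.symm
  omega

lemma prod_weights (k : ℕ) :
    ∏ l ∈ range (k+1), ((1/2:ℝ) - l) = (-1)^k * ((2*k).factorial : ℝ) / (2^(2*k+1) * (k.factorial : ℝ)) := by
  induction k with
  | zero => norm_num
  | succ k ih =>
    rw [Finset.prod_range_succ, ih]
    have hk : ((2*(k+1)).factorial : ℝ) = (2*k).factorial * (2*k+1) * (2*k+2) := by
      rw [show 2*(k+1) = (2*k+1)+1 by ring, Nat.factorial_succ, show 2*k+1 = (2*k)+1 by ring,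
        Nat.factorial_succ]
      push_cast; ring
    rw [hk]
    have h1 : (k.factorial : ℝ) ≠ 0 := by positivity
    have h2 : ((k+1).factorial : ℝ) = (k.factorial : ℝ) * (k+1) := by
      rw [Nat.factorial_succ]; push_cast; ring
    rw [h2]
    field_simp
    push_cast
    ring

lemma tele_eval (a : ℝ) (n : ℕ) (e G : ℕ → ℝ) (h0 : e (n+1) = 0)
    (hrec : ∀ k, k ≤ n → ((1/2:ℝ) - k) * e k = a * e (k+1) + G k) :
    e 0 = ∑ k ∈ range (n+1), G k * a^k * (∏ l ∈ range (k+1), ((1/2:ℝ) - l))⁻¹ := by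
  set E : ℕ → ℝ := fun k => e k * a^k * (∏ l ∈ range k, ((1/2:ℝ) - l))⁻¹ with hE
  have key : ∀ k ∈ range (n+1), E k - E (k+1) = G k * a^k * (∏ l ∈ range (k+1), ((1/2:ℝ) - l))⁻¹ := by
    intro k hk
    rw [Finset.mem_range] at hk
    have hr := hrec k (by omega)
    have he : e k = ((1/2:ℝ) - k)⁻¹ * (a * e (k+1) + G k) := by
      rw [← hr, ← mul_assoc, inv_mul_cancel₀ (half_sub_ne' k), one_mul]
    simp only [hE]
    rw [he, Finset.prod_range_succ, mul_inv, pow_succ]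
    ring
  have hsum := Finset.sum_congr rfl key
  rw [Finset.sum_range_sub' E (n+1)] at hsum
  have hE1 : E (n+1) = 0 := by simp only [hE]; rw [h0]; ring
  have hE0 : E 0 = e 0 := by simp only [hE]; simp
  rw [hE0, hE1, sub_zero] at hsum
  exact hsum

noncomputable def Vs (y : ℝ) (n : ℕ) : ℝ :=
  ∑ k ∈ range (n+1), ((n+k).choose (2*k) : ℝ) * (1-y)^(2*k) * y^(n-k)

lemma pascal2 (M r : ℕ) :
    (M+1+1).choose (r+1+1) + M.choose (r+1+1) = 2 * ((M+1).choose (r+1+1)) + M.choose r := by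
  rw [Nat.choose_succ_succ (M+1) (r+1), Nat.choose_succ_succ M (r+1), Nat.choose_succ_succ M r]
  ring

lemma Vs_rec (y : ℝ) (n : ℕ) :
    Vs y (n+2) + y^2 * Vs y n = (2*y + (1-y)^2) * Vs y (n+1) := by
  have hzero : ∀ j : ℕ, n + j < 2*j → ((n+j).choose (2*j) : ℝ) = 0 := fun j hj => by
    rw [Nat.choose_eq_zero_of_lt hj, Nat.cast_zero]
  have e1 : Vs y (n+2) = ∑ k ∈ range (n+2+1), ((n+2+k).choose (2*k) : ℝ) * (1-y)^(2*k) * y^(n+2-k) := rfl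
  have e2 : y^2 * Vs y n = ∑ k ∈ range (n+2+1), ((n+k).choose (2*k) : ℝ) * (1-y)^(2*k) * y^(n+2-k) := by
    rw [Vs, Finset.mul_sum]
    rw [← Finset.sum_subset (Finset.range_subset_range.mpr (by omega : n+1 ≤ n+2+1))
      (fun k hk hk2 => ?_)]
    · apply Finset.sum_congr rfl fun k hk => ?_
      rw [Finset.mem_range] at hk
      rw [show n+2-k = (n-k)+2 by omega, pow_add]
      ring
    · rw [Finset.mem_range] at hk hk2
      rw [hzero k (by omega)]
      ring
  have e3a : 2*y*Vs y (n+1) = ∑ k ∈ range (n+2+1), 2*((n+1+k).choose (2*k) : ℝ) * (1-y)^(2*k) * y^(n+2-k) := by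
    rw [Vs, Finset.mul_sum]
    rw [← Finset.sum_subset (Finset.range_subset_range.mpr (by omega : n+1+1 ≤ n+2+1))
      (fun k hk hk2 => ?_)]
    · apply Finset.sum_congr rfl fun k hk => ?_
      rw [Finset.mem_range] at hk
      rw [show n+2-k = (n+1-k)+1 by omega, pow_succ]
      ring
    · rw [Finset.mem_range] at hk hk2
      have : ((n+1+k).choose (2*k) : ℝ) = 0 := by
        rw [Nat.choose_eq_zero_of_lt (by omega), Nat.cast_zero]
      rw [this]
      ring
  have e3b : (1-y)^2 * Vs y (n+1)
      = ∑ k ∈ range (n+2+1),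
          (if k = 0 then (0:ℝ) else ((n+k).choose (2*k-2) : ℝ)) * (1-y)^(2*k) * y^(n+2-k) := by
    rw [Vs, Finset.mul_sum]
    symm
    rw [Finset.sum_range_succ']
    simp only [if_true, Nat.succ_ne_zero, if_false, zero_mul, add_zero, ite_true, ite_false]
    rw [show n+2 = n+1+1 by omega]
    apply Finset.sum_congr rfl fun k hk => ?_
    rw [Finset.mem_range] at hk
    rw [show 2*(k+1)-2 = 2*k by omega, show n+1+1-(k+1) = n+1-k by omega,
      show n+(k+1) = n+1+k by omega, show 2*(k+1) = 2*k+2 by omega, pow_add]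
    ring
  rw [e1, e2, add_mul, e3a, e3b, ← Finset.sum_add_distrib, ← Finset.sum_add_distrib]
  apply Finset.sum_congr rfl fun k _ => ?_
  rcases k with _ | j
  · simp
    ring
  · rw [if_neg (Nat.succ_ne_zero j)]
    have hp := pascal2 (n+j+1) (2*j)
    have hcast : ((n+2+(j+1)).choose (2*(j+1)) : ℝ) + ((n+(j+1)).choose (2*(j+1)) : ℝ)
        = 2 * ((n+1+(j+1)).choose (2*(j+1)) : ℝ) + ((n+(j+1)).choose (2*(j+1)-2) : ℝ) := by
      rw [show n+2+(j+1) = (n+j+1)+1+1 by omega, show 2*(j+1) = 2*j+1+1 by omega,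
        show n+(j+1) = n+j+1 by omega, show n+1+(j+1) = (n+j+1)+1 by omega,
        show 2*j+1+1-2 = 2*j by omega]
      exact_mod_cast hp
    linear_combination ((1-y)^(2*(j+1)) * y^(n+2-(j+1))) * hcast

lemma Vs_closed (y : ℝ) (n : ℕ) : (1+y) * Vs y n = y^(2*n+1) + 1 := by
  induction n using Nat.twoStepInduction with
  | zero => simp [Vs]; ring
  | one =>
    have h1 : Vs y 1 = y + (1-y)^2 := by
      simp [Vs, Finset.sum_range_succ]
    rw [h1]; ring
  | more n ih0 ih1 =>
    have h := Vs_rec y n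
    linear_combination (1+y)*h + (2*y+(1-y)^2)*ih1 - y^2*ih0

lemma hEval (n : ℕ) (A B : ℝ) :
    (solODE (Polynomial.derivative^[n] ((X - C A)^n * (X - C B)^n))).eval A
      = ∑ k ∈ range (n+1), ((n.choose k : ℝ) * (A-B)^(n-k) * ((n+k).factorial : ℝ))
          * A^k * (∏ l ∈ range (k+1), ((1/2:ℝ) - l))⁻¹ := by
  set p : Polynomial ℝ := (X - C A)^n * (X - C B)^n with hp
  set g : Polynomial ℝ := Polynomial.derivative^[n] p with hg
  set h : Polynomial ℝ := solODE g with hh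
  have hpdeg : p.natDegree ≤ 2*n := by
    apply Polynomial.natDegree_mul_le.trans
    have h1 : ((X - C A)^n : Polynomial ℝ).natDegree ≤ n := by
      apply Polynomial.natDegree_pow_le.trans
      rw [Polynomial.natDegree_X_sub_C]; omega
    have h2 : ((X - C B)^n : Polynomial ℝ).natDegree ≤ n := by
      apply Polynomial.natDegree_pow_le.trans
      rw [Polynomial.natDegree_X_sub_C]; omega
    omega
  have hgdeg : g.natDegree ≤ n := by
    rw [hg]
    apply (Polynomial.natDegree_iterate_derivative _ _).trans
    omega
  have hhdeg : h.natDegree ≤ n := (solODE_natDegree_le g).trans hgdeg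
  have hzero : Polynomial.derivative^[n+1] h = 0 :=
    Polynomial.iterate_derivative_eq_zero (by omega)
  have e0 := tele_eval A n (fun k => (Polynomial.derivative^[k] h).eval A)
      (fun k => (Polynomial.derivative^[k] g).eval A)
      (by simp only [hzero, Polynomial.eval_zero])
      (fun k hk => by
        have hiter := congrArg (Polynomial.eval A) (ode_iter h g (1/2 : ℝ) (solODE_spec g) k)
        simp only [Polynomial.eval_add, Polynomial.eval_neg, Polynomial.eval_mul,
          Polynomial.eval_X, Polynomial.eval_C] at hiter
        rw [← Function.iterate_succ_apply' Polynomial.derivative k h] at hiter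
        linarith)
  simp only [Function.iterate_zero, id_eq] at e0
  rw [e0]
  apply Finset.sum_congr rfl fun k hk => ?_
  rw [Finset.mem_range] at hk
  have : Polynomial.derivative^[k] g = Polynomial.derivative^[n+k] p := by
    rw [hg, ← Function.iterate_add_apply, add_comm]
  simp only [this]
  rw [p_iter_deriv_eval A B n k (by omega)]

lemma fact_id (n k : ℕ) (hk : k ≤ n) :
    n.choose k * (n+k).factorial * k.factorial
      = n.factorial * ((n+k).choose (2*k)) * (2*k).factorial := by
  have h1 := Nat.choose_mul_factorial_mul_factorial hk
  have h2 := Nat.choose_mul_factorial_mul_factorial (show 2*k ≤ n+k by omega)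
  rw [show n+k-2*k = n-k by omega] at h2
  apply Nat.eq_of_mul_eq_mul_right (Nat.factorial_pos (n-k))
  calc n.choose k * (n+k).factorial * k.factorial * (n-k).factorial
      = (n.choose k * k.factorial * (n-k).factorial) * (n+k).factorial := by ring
    _ = n.factorial * (n+k).factorial := by rw [h1]
    _ = n.factorial * ((n+k).choose (2*k) * (2*k).factorial * (n-k).factorial) := by rw [h2]
    _ = n.factorial * ((n+k).choose (2*k)) * (2*k).factorial * (n-k).factorial := by ring

lemma sum_eval (n : ℕ) (A ε y : ℝ) (hε : ε = 1 ∨ ε = -1) (hy : y ≠ 0) (hy1 : (1:ℝ) + y ≠ 0)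
    (hA : (1-y)^2 = -2*ε*A*y) :
    ∑ k ∈ range (n+1), ((n.choose k : ℝ) * (ε*2)^(n-k) * ((n+k).factorial : ℝ))
        * A^k * (∏ l ∈ range (k+1), ((1/2:ℝ) - l))⁻¹
      = ε^n * 2^(n+1) * (n.factorial : ℝ) * (y^(2*n+1) + 1) / ((1+y) * y^n) := by
  have f2k : ∀ m : ℕ, ((m).factorial:ℝ) ≠ 0 := fun m => Nat.cast_ne_zero.mpr (Nat.factorial_ne_zero _)
  have hVs : ∑ k ∈ range (n+1), ((n.choose k : ℝ) * (ε*2)^(n-k) * ((n+k).factorial : ℝ))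
        * A^k * (∏ l ∈ range (k+1), ((1/2:ℝ) - l))⁻¹
      = ε^n * 2^(n+1) * (n.factorial : ℝ) * (Vs y n / y^n) := by
    rw [Vs, Finset.sum_div, Finset.mul_sum]
    apply Finset.sum_congr rfl fun k hk => ?_
    rw [Finset.mem_range] at hk
    rw [prod_weights k]
    have hfact : ((n.choose k : ℝ)) * ((n+k).factorial : ℝ) * (k.factorial : ℝ)
        = (n.factorial : ℝ) * (((n+k).choose (2*k) : ℝ)) * ((2*k).factorial : ℝ) := by
      exact_mod_cast congrArg (Nat.cast : ℕ → ℝ) (fact_id n k (by omega))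
    have hyk : (1-y)^(2*k) * y^(n-k) / y^n = (-2)^k * ε^k * A^k := by
      have h1 : (1-y)^(2*k) = (-2*ε*A*y)^k := by rw [pow_mul, hA]
      have hyn : (y:ℝ)^n = y^(n-k) * y^k := by rw [← pow_add]; congr 1; omega
      rw [h1, hyn]
      have hk1 : (y:ℝ)^k ≠ 0 := pow_ne_zero _ hy
      have hk2 : (y:ℝ)^(n-k) ≠ 0 := pow_ne_zero _ hy
      field_simp
      ring
    have hεn : ε^(n-k) = ε^n * ε^k := by
      have hε2 : ε^(2*k) = 1 := by
        rw [pow_mul]; rcases hε with h | h <;> rw [h] <;> norm_num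
      calc ε^(n-k) = ε^(n-k) * ε^(2*k) := by rw [hε2, mul_one]
        _ = ε^(n-k+2*k) := (pow_add ε _ _).symm
        _ = ε^(n+k) := by congr 1; omega
        _ = ε^n * ε^k := pow_add ..
    have h2n : (2:ℝ)^(n-k) = 2^(n+1) * 2^k / 2^(2*k+1) := by
      rw [eq_div_iff (by positivity), ← pow_add, ← pow_add]; congr 1; omega
    have hW : ((-1:ℝ)^k * ((2*k).factorial:ℝ) / (2^(2*k+1) * (k.factorial:ℝ)))⁻¹
        = (-1:ℝ)^k * ((2:ℝ)^(2*k+1) * (k.factorial:ℝ)) / ((2*k).factorial:ℝ) := by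
      have hm : (-1:ℝ)^k * (-1)^k = 1 := by rw [← pow_add, ← two_mul, pow_mul]; norm_num
      apply inv_eq_of_mul_eq_one_right
      field_simp
      linear_combination hm
    have htail : ((n+k).choose (2*k) : ℝ) * (1-y)^(2*k) * y^(n-k) / y^n
        = ((n+k).choose (2*k) : ℝ) * ((-2)^k * ε^k * A^k) := by
      rw [mul_assoc, mul_div_assoc, hyk]
    rw [hW, htail, mul_pow, hεn, h2n]
    have hneg2 : (-2:ℝ)^k = (-1)^k * 2^k := by rw [← neg_one_mul, mul_pow]
    rw [hneg2]
    have h2ne : ((2:ℝ)^(2*k+1)) ≠ 0 := by positivity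
    field_simp
    linear_combination (ε^n*ε^k*A^k) * hfact
  rw [hVs]
  have hv := Vs_closed y n
  rw [show Vs y n = (y^(2*n+1) + 1)/(1+y) by field_simp; linarith [hv]]
  field_simp

set_option maxHeartbeats 1600000 in
theorem legendre_integral_pow_three_halves (n : ℕ) (ξ : ℝ) (hξ : 0 < ξ) :
    ∫ s in (-1 : ℝ)..1, legendreP n s / (Real.cosh ξ - s) ^ (3 / 2 : ℝ) =
      2 * Real.sqrt 2 / Real.sinh ξ * Real.exp (-(n + 1 / 2) * ξ) := by
  set c : ℝ := Real.cosh ξ with hcdef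
  set x : ℝ := Real.exp (-ξ) with hxdef
  have hx0 : 0 < x := Real.exp_pos _
  have hx1 : x < 1 := by
    rw [hxdef, Real.exp_lt_one_iff]; linarith
  have hxinv : Real.exp ξ = x⁻¹ := by
    rw [hxdef, ← Real.exp_neg, neg_neg]
  have hxne : x ≠ 0 := ne_of_gt hx0
  have hc : c = (x + x⁻¹)/2 := by
    rw [hcdef, Real.cosh_eq, hxinv, hxdef]; ring
  have hcm1 : c - 1 = (1-x)^2/(2*x) := by
    rw [hc]; field_simp; ring
  have hcp1 : c + 1 = (1+x)^2/(2*x) := by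
    rw [hc]; field_simp; ring
  have hc1 : 1 < c := by
    have h2 : 0 < (1-x)^2/(2*x) :=
      div_pos (pow_pos (by linarith) 2) (by linarith)
    linarith [hcm1.symm.le.trans_lt (lt_add_of_pos_left _ h2)]
  -- polynomial setup
  set K : ℝ := 2^n * (n.factorial : ℝ) with hK
  have hKpos : 0 < K := by positivity
  set p : Polynomial ℝ := (X - C (c-1))^n * (X - C (c+1))^n with hp
  set g : Polynomial ℝ := Polynomial.derivative^[n] p with hg
  set h : Polynomial ℝ := solODE g with hh
  set Q : Polynomial ℝ := C ((-1:ℝ)^n) * (h.comp (C c - X)) with hQ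
  set w : Polynomial ℝ := ((X:Polynomial ℝ)^2 - 1)^n with hw
  have hpcomp : p.comp (C c - X) = w := by
    rw [hp, hw, mul_comp, pow_comp, pow_comp, sub_comp, sub_comp, X_comp, C_comp, C_comp,
      ← mul_pow]
    congr 1
    rw [map_sub, map_add, map_one]
    ring
  have hDnw : Polynomial.derivative^[n] w = C ((-1:ℝ)^n) * (g.comp (C c - X)) := by
    rw [← hpcomp, iter_deriv_comp_reflect, hg]
  have hODE : (C c - X) * Polynomial.derivative Q + C (1/2:ℝ) * Q
      = Polynomial.derivative^[n] w := by
    rw [hDnw, hQ, derivative_C_mul, Polynomial.derivative_comp,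
      derivative_sub, derivative_C, derivative_X, zero_sub]
    have hcomp := congrArg (fun q : Polynomial ℝ => q.comp (C c - X)) (solODE_spec g)
    simp only [add_comp, neg_comp, mul_comp, X_comp, C_comp] at hcomp
    linear_combination (C ((-1:ℝ)^n)) * hcomp
  have hlegendre : ∀ s : ℝ, legendreP n s = (Polynomial.derivative^[n] w).eval s / K := by
    intro s
    rw [legendreP]
    have hfun : (fun t : ℝ => (t^2 - 1)^n) = fun t : ℝ => w.eval t := by
      funext t; rw [hw]; simp
    rw [hfun, iteratedDeriv_polyeval]
    rw [hK]
    ring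
  have hcs : ∀ s : ℝ, s ∈ Set.uIcc (-1:ℝ) 1 → 0 < c - s := by
    intro s hs
    rw [Set.uIcc_of_le (by norm_num : (-1:ℝ) ≤ 1)] at hs
    have := hs.2
    linarith
  set F : ℝ → ℝ := fun s => Q.eval s / (K * Real.sqrt (c - s)) with hF
  set f' : ℝ → ℝ :=
    fun s => (Polynomial.derivative^[n] w).eval s / (K * ((c - s) * Real.sqrt (c-s))) with hf'
  have hderiv : ∀ s ∈ Set.uIcc (-1:ℝ) 1, HasDerivAt F (f' s) s := by
    intro s hs
    have hpos := hcs s hs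
    have hsq : Real.sqrt (c - s) * Real.sqrt (c - s) = c - s := Real.mul_self_sqrt hpos.le
    have hsqpos : 0 < Real.sqrt (c - s) := Real.sqrt_pos.mpr hpos
    have d1 : HasDerivAt (fun t : ℝ => Q.eval t) ((Polynomial.derivative Q).eval s) s :=
      Q.hasDerivAt s
    have d2 : HasDerivAt (fun t : ℝ => c - t) (-1) s := by
      simpa using (hasDerivAt_id s).const_sub c
    have d3 : HasDerivAt (fun t : ℝ => Real.sqrt (c - t)) (1/(2*Real.sqrt (c-s)) * (-1)) s :=
      (Real.hasDerivAt_sqrt hpos.ne').comp s d2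
    have d4 : HasDerivAt (fun t : ℝ => K * Real.sqrt (c - t))
        (K * (1/(2*Real.sqrt (c-s)) * (-1))) s := d3.const_mul K
    have dne : K * Real.sqrt (c - s) ≠ 0 := by positivity
    have d5 := d1.div d4 dne
    convert d5 using 1
    · rfl
    · rfl
    · rfl
    have hode := congrArg (Polynomial.eval s) hODE
    simp only [Polynomial.eval_add, Polynomial.eval_mul, Polynomial.eval_sub,
      Polynomial.eval_C, Polynomial.eval_X] at hode
    simp only [hf']
    rw [div_eq_div_iff (by positivity) (by positivity)]
    field_simp
    linear_combination (-(2*Real.sqrt (c-s)^2))*hode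
      + (Polynomial.eval s Q)*hsq
  have hcont : IntervalIntegrable f' MeasureTheory.volume (-1) 1 := by
    apply ContinuousOn.intervalIntegrable
    apply ContinuousOn.div
    · exact (Polynomial.continuous _).continuousOn
    · apply continuousOn_const.mul
      apply ContinuousOn.mul
      · exact (continuous_const.sub continuous_id).continuousOn
      · exact (Real.continuous_sqrt.comp (continuous_const.sub continuous_id)).continuousOn
    · intro s hs
      have h1 := hcs s hs
      have h2 : 0 < Real.sqrt (c - s) := Real.sqrt_pos.mpr h1
      positivity
  have heq : Set.EqOn (fun s => legendreP n s / (c - s) ^ (3 / 2 : ℝ)) f'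
      (Set.uIcc (-1:ℝ) 1) := by
    intro s hs
    have hpos := hcs s hs
    simp only [hf']
    rw [hlegendre s]
    rw [show (3/2:ℝ) = 1 + 1/2 by norm_num, Real.rpow_add hpos, Real.rpow_one,
      ← Real.sqrt_eq_rpow, div_div]
  rw [intervalIntegral.integral_congr heq,
    intervalIntegral.integral_eq_sub_of_hasDerivAt hderiv hcont]
  -- endpoint evaluations
  have hQ1 : Q.eval 1 = (-1:ℝ)^n * h.eval (c-1) := by
    rw [hQ, Polynomial.eval_mul, Polynomial.eval_C, Polynomial.eval_comp,
      Polynomial.eval_sub, Polynomial.eval_C, Polynomial.eval_X]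
  have hQm1 : Q.eval (-1) = (-1:ℝ)^n * h.eval (c+1) := by
    rw [hQ, Polynomial.eval_mul, Polynomial.eval_C, Polynomial.eval_comp,
      Polynomial.eval_sub, Polynomial.eval_C, Polynomial.eval_X, sub_neg_eq_add]
  have hone : (1:ℝ) + x ≠ 0 := by linarith
  have hone' : (1:ℝ) + -x ≠ 0 := by linarith
  have hva : h.eval (c-1)
      = (-1:ℝ)^n * 2^(n+1) * (n.factorial : ℝ) * (x^(2*n+1) + 1) / ((1+x) * x^n) := by
    rw [hh, hg, hp, hEval n (c-1) (c+1)]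
    rw [show c - 1 - (c+1) = (-1:ℝ)*2 by ring]
    exact sum_eval n (c-1) (-1) x (Or.inr rfl) hxne hone
      (by rw [hcm1]; field_simp)
  have hvb : h.eval (c+1)
      = 1^n * 2^(n+1) * (n.factorial : ℝ) * ((-x)^(2*n+1) + 1) / ((1 + -x) * (-x)^n) := by
    rw [hh, hg, hp, mul_comm ((X - C (c-1))^n) ((X - C (c+1))^n), hEval n (c+1) (c-1)]
    rw [show c + 1 - (c-1) = (1:ℝ)*2 by ring]
    exact sum_eval n (c+1) 1 (-x) (Or.inl rfl) (by simpa using hxne) hone'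
      (by rw [hcp1]; field_simp; ring)
  have hm1 : (-1:ℝ)^n*(-1)^n = 1 := by
    rw [← pow_add, ← two_mul, pow_mul]; norm_num
  have hxnn : (x:ℝ)^n ≠ 0 := pow_ne_zero _ hxne
  have hQ1v : Q.eval 1 = 2^(n+1)*(n.factorial:ℝ)*(x^(2*n+1)+1)/((1+x)*x^n) := by
    rw [hQ1, hva]
    rw [show ((-1:ℝ)^n * ((-1:ℝ)^n * 2^(n+1) * (n.factorial:ℝ) * (x^(2*n+1)+1) / ((1+x)*x^n)))
        = ((-1:ℝ)^n*(-1)^n) * (2^(n+1) * (n.factorial:ℝ) * (x^(2*n+1)+1) / ((1+x)*x^n)) by ring,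
      hm1, one_mul]
  have hQm1v : Q.eval (-1) = 2^(n+1)*(n.factorial:ℝ)*(1 - x^(2*n+1))/((1-x)*x^n) := by
    have ho : ((-x:ℝ))^(2*n+1) = -(x^(2*n+1)) := Odd.neg_pow ⟨n, by omega⟩ x
    have hnp : ((-x:ℝ))^n = (-1:ℝ)^n * x^n := by rw [neg_pow]
    have h1x : (1:ℝ) - x ≠ 0 := ne_of_gt (by linarith)
    have h1x' : (1:ℝ) + -x ≠ 0 := ne_of_gt (by linarith)
    have hmne : ((-1:ℝ)^n) ≠ 0 := pow_ne_zero _ (by norm_num)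
    rw [hQm1, hvb, one_pow, ho, hnp, ← mul_div_assoc]
    rw [div_eq_div_iff (mul_ne_zero h1x' (mul_ne_zero hmne hxnn)) (mul_ne_zero h1x hxnn)]
    linear_combination ((2:ℝ)^(n+1)*(n.factorial:ℝ)*((-(x^(2*n+1))+1)*((1-x)*x^n)
      + (x*x^n + x*x^(3*n) - x^2*x^(3*n) - x^n)))*hm1
  set u := Real.sqrt x with hu
  set v := Real.sqrt 2 with hv
  have hu2 : u * u = x := Real.mul_self_sqrt hx0.le
  have hv2 : v * v = 2 := Real.mul_self_sqrt (by norm_num)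
  have hupos : 0 < u := Real.sqrt_pos.mpr hx0
  have hvpos : 0 < v := Real.sqrt_pos.mpr (by norm_num)
  have hvu2 : (v*u)^2 = 2*x := by
    have hh2 : (v*u)^2 = (v*v)*(u*u) := by ring
    rw [hh2, hu2, hv2]
  have hsa : Real.sqrt (c-1) = (1-x)/(v*u) := by
    have h1 : ((1-x)/(v*u))^2 = c - 1 := by
      rw [div_pow, hvu2, ← hcm1]
    rw [← h1, Real.sqrt_sq (div_nonneg (by linarith) (by positivity))]
  have hsb : Real.sqrt (c+1) = (1+x)/(v*u) := by
    have h1 : ((1+x)/(v*u))^2 = c + 1 := by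
      rw [div_pow, hvu2, ← hcp1]
    rw [← h1, Real.sqrt_sq (div_nonneg (by linarith) (by positivity))]
  have hsinh : Real.sinh ξ = (1-x^2)/(2*x) := by
    rw [Real.sinh_eq, hxinv]
    rw [← hxdef]
    field_simp
  have hexp : Real.exp (-((n:ℝ) + 1/2) * ξ) = x^n * u := by
    have h1 : (-((n:ℝ) + 1/2) * ξ) = (n:ℝ)*(-ξ) + (-(ξ/2)) := by ring
    rw [h1, Real.exp_add, Real.exp_nat_mul, ← hxdef]
    congr 1
    have h2 : x = Real.exp (-(ξ/2)) * Real.exp (-(ξ/2)) := by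
      rw [← Real.exp_add, hxdef]; congr 1; ring
    rw [hu, h2, Real.sqrt_mul_self (Real.exp_pos _).le]
  simp only [hF]
  rw [show c - (-1:ℝ) = c + 1 by ring]
  rw [hQ1v, hQm1v, hsa, hsb, hsinh, hexp]
  rw [show (2:ℝ)^(n+1)*(n.factorial:ℝ) = 2*K by rw [hK]; ring]
  have hx2 : (1:ℝ) - x^2 ≠ 0 := ne_of_gt (by nlinarith)
  have hone2 : (1:ℝ) + x ≠ 0 := by linarith
  have hone3 : (1:ℝ) - x ≠ 0 := ne_of_gt (by nlinarith)
  field_simp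
  ring
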